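/- Every subgroup of a CSA group is CSA. -/

import Mathlib

universe u

/-- A group is *CSA* if every maximal abelian subgroup `A` is malnormal:
for every `g ∉ A`, `A ⊓ gAg⁻¹ = ⊥`. -/
def IsCSA (G : Type u) [Group G] : Prop :=
  ∀ A : Subgroup G, Maximal (fun B : Subgroup G => IsMulCommutative B) A →
    ∀ g : G, g ∉ A → A ⊓ Subgroup.map (MulAut.conj g).toMonoidHom A = ⊥

lemma exists_max_comm {G : Type u} [Group G] (A : Subgroup G) (hA : IsMulCommutative A) :
    ∃ B, A ≤ B ∧ Maximal (fun B : Subgroup G => IsMulCommutative B) B := by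
  obtain ⟨m, hm, hmax⟩ := zorn_le_nonempty₀ {B : Subgroup G | IsMulCommutative B}
    (fun c hcs hc y hy => by
      refine ⟨sSup c, ⟨⟨fun a b => ?_⟩⟩, fun z hz => le_sSup hz⟩
      have hdir : DirectedOn (· ≤ ·) c := hc.directedOn
      obtain ⟨sa, hsa, hsa'⟩ := (Subgroup.mem_sSup_of_directedOn ⟨y, hy⟩ hdir).1 a.2
      obtain ⟨sb, hsb, hsb'⟩ := (Subgroup.mem_sSup_of_directedOn ⟨y, hy⟩ hdir).1 b.2
      obtain ⟨s, hs, h1, h2⟩ := hdir sa hsa sb hsb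
      have : IsMulCommutative s := hcs hs
      exact Subtype.ext (Subgroup.mul_comm_of_mem_isMulCommutative s (h1 hsa') (h2 hsb')))
    A hA
  exact ⟨m, hm, hmax⟩

/-- Every subgroup of a CSA group is CSA. -/
theorem stmt_5 (G : Type u) [Group G] (hcsa : IsCSA G) (H : Subgroup G) :
    IsCSA H := by
  intro A hA g hg
  -- image of A in G is commutative
  haveI := hA.1
  have hAc : IsMulCommutative (A.map H.subtype) := by
    refine ⟨⟨fun a b => ?_⟩⟩
    obtain ⟨x, hx, hx'⟩ := a.2
    obtain ⟨y, hy, hy'⟩ := b.2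
    have := Subgroup.mul_comm_of_mem_isMulCommutative (H := A) hx hy
    exact Subtype.ext (by
      simp only [Subgroup.coe_mul]
      rw [← hx', ← hy']
      exact_mod_cast congrArg (H.subtype) this)
  obtain ⟨B, hAB, hBmax⟩ := exists_max_comm (A.map H.subtype) hAc
  by_cases hgB : (g : G) ∈ B
  · -- then B.comap H.subtype is commutative, contains A, so equals A, so g ∈ A, contradiction
    exfalso
    haveI := hBmax.1
    have hcomm : IsMulCommutative (B.comap H.subtype) := by
      refine ⟨⟨fun a b => ?_⟩⟩
      have := Subgroup.mul_comm_of_mem_isMulCommutative (H := B) a.2 b.2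
      exact Subtype.ext (Subtype.ext this)
    have hle : A ≤ B.comap H.subtype := fun x hx =>
      hAB ⟨x, hx, rfl⟩
    have : B.comap H.subtype ≤ A := hA.2 hcomm hle
    exact hg (this hgB)
  · -- apply CSA in G
    have hbot := hcsa B hBmax g hgB
    rw [eq_bot_iff]
    intro x hx
    obtain ⟨hx1, y, hy, hy'⟩ := hx
    have hxB : (x : G) ∈ B := hAB ⟨x, hx1, rfl⟩
    have hyB : (y : G) ∈ B := hAB ⟨y, hy, rfl⟩
    have hxconj : (x : G) ∈ Subgroup.map (MulAut.conj (g : G)).toMonoidHom B := by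
      refine ⟨(y : G), hyB, ?_⟩
      have : ((g * y * g⁻¹ : H) : G) = (x : G) := congrArg _ hy'
      simpa using this
    have : (x : G) ∈ (⊥ : Subgroup G) := hbot ▸ (Subgroup.mem_inf.2 ⟨hxB, hxconj⟩)
    have : (x : G) = 1 := Subgroup.mem_bot.1 this
    simpa [Subgroup.mem_bot] using Subtype.ext this
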